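/- Let G be a second countable locally compact Hausdorff topological group with left Haar measure μ, let ω₁ and ω₂ be Borel 2-cocycles on G, and let v : G → 𝕋 be a Borel function such that ω₁(h⁻¹,g⁻¹) = ω₂(h⁻¹,g⁻¹)·v(g)·v(h)·\overline{v(gh)} for all g,h ∈ G. For i = 1,2 let U_i be the unitary on L²(G×G, μ×μ) given by (U_i ξ)(s,t) = ω_i(t⁻¹s,s⁻¹)·ξ(s,s⁻¹t), let M_v, M_{v̄} denote the unitary multiplication operators on L²(G,μ) by v and by \overline{v}, and let M_v⊗M_{v̄} and 1⊗M_v denote the corresponding multiplication operators on L²(G×G, μ×μ), i.e. ((M_v⊗M_{v̄})ξ)(s,t) = v(s)\overline{v(t)}ξ(s,t) and ((1⊗M_v)ξ)(s,t) = v(t)ξ(s,t). Then U₁ = (M_v⊗M_{v̄}) ∘ U₂ ∘ (1⊗M_v). -/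

import Mathlib

open MeasureTheory

/-- Let `ω₁, ω₂` be Borel 2-cocycles on `G` and `v : G → 𝕋` Borel with
`ω₁(h⁻¹,g⁻¹) = ω₂(h⁻¹,g⁻¹)·v(g)·v(h)·conj(v(gh))`. For `i = 1,2` let `U_i` be the unitary on
`L²(G×G)` with `(U_i ξ)(s,t) = ω_i(t⁻¹s,s⁻¹)·ξ(s,s⁻¹t)`, let `P = M_v ⊗ M_{v̄}` be the
multiplication operator `(Pξ)(s,t) = v(s)·conj(v(t))·ξ(s,t)` and `Q = 1 ⊗ M_v` the
multiplication operator `(Qξ)(s,t) = v(t)·ξ(s,t)`. Then `U₁ = P ∘ U₂ ∘ Q`. -/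
theorem stmt_12 {G : Type*} [TopologicalSpace G] [Group G] [IsTopologicalGroup G]
    [SecondCountableTopology G] [LocallyCompactSpace G] [T2Space G]
    [MeasurableSpace G] [BorelSpace G]
    (μ : Measure G) [μ.IsHaarMeasure]
    (ω₁ ω₂ : G → G → ℂ)
    (hmeas₁ : Measurable fun p : G × G => ω₁ p.1 p.2)
    (habs₁ : ∀ g h : G, ‖ω₁ g h‖ = 1)
    (hcoc₁ : ∀ g h k : G, ω₁ g h * ω₁ (g * h) k = ω₁ g (h * k) * ω₁ h k)
    (hmeas₂ : Measurable fun p : G × G => ω₂ p.1 p.2)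
    (habs₂ : ∀ g h : G, ‖ω₂ g h‖ = 1)
    (hcoc₂ : ∀ g h k : G, ω₂ g h * ω₂ (g * h) k = ω₂ g (h * k) * ω₂ h k)
    (v : G → ℂ) (hvmeas : Measurable v) (hvabs : ∀ g : G, ‖v g‖ = 1)
    (hcohom : ∀ g h : G, ω₁ h⁻¹ g⁻¹ = ω₂ h⁻¹ g⁻¹ * v g * v h * starRingEnd ℂ (v (g * h)))
    (U₁ U₂ P Q : Lp ℂ 2 (μ.prod μ) ≃ₗᵢ[ℂ] Lp ℂ 2 (μ.prod μ))
    (hU₁ : ∀ ξ : Lp ℂ 2 (μ.prod μ), (U₁ ξ : G × G → ℂ) =ᵐ[μ.prod μ]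
      fun p => ω₁ (p.2⁻¹ * p.1) p.1⁻¹ * ξ (p.1, p.1⁻¹ * p.2))
    (hU₂ : ∀ ξ : Lp ℂ 2 (μ.prod μ), (U₂ ξ : G × G → ℂ) =ᵐ[μ.prod μ]
      fun p => ω₂ (p.2⁻¹ * p.1) p.1⁻¹ * ξ (p.1, p.1⁻¹ * p.2))
    (hP : ∀ ξ : Lp ℂ 2 (μ.prod μ), (P ξ : G × G → ℂ) =ᵐ[μ.prod μ]
      fun p => v p.1 * starRingEnd ℂ (v p.2) * ξ p)
    (hQ : ∀ ξ : Lp ℂ 2 (μ.prod μ), (Q ξ : G × G → ℂ) =ᵐ[μ.prod μ]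
      fun p => v p.2 * ξ p) :
    ∀ ξ : Lp ℂ 2 (μ.prod μ), U₁ ξ = P (U₂ (Q ξ)) := by
  intro ξ
  have hT : MeasurePreserving (fun z : G × G => (z.1, z.1⁻¹ * z.2)) (μ.prod μ) (μ.prod μ) :=
    measurePreserving_prod_inv_mul μ μ
  -- transport hQ ξ along T
  have hQ' : (fun p : G × G => (Q ξ : G × G → ℂ) (p.1, p.1⁻¹ * p.2)) =ᵐ[μ.prod μ]
      fun p : G × G => v (p.1⁻¹ * p.2) * ξ (p.1, p.1⁻¹ * p.2) :=
    hT.quasiMeasurePreserving.ae_eq (hQ ξ)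
  apply MeasureTheory.Lp.ext
  calc (U₁ ξ : G × G → ℂ)
      =ᵐ[μ.prod μ] fun p => ω₁ (p.2⁻¹ * p.1) p.1⁻¹ * ξ (p.1, p.1⁻¹ * p.2) := hU₁ ξ
    _ =ᵐ[μ.prod μ] fun p => v p.1 * starRingEnd ℂ (v p.2) *
        (ω₂ (p.2⁻¹ * p.1) p.1⁻¹ * ((Q ξ : G × G → ℂ) (p.1, p.1⁻¹ * p.2))) := by
        filter_upwards [hQ'] with p hp
        rw [hp]
        have := hcohom p.1 (p.1⁻¹ * p.2)
        simp only [mul_inv_rev, inv_inv, mul_assoc, inv_mul_cancel_left, mul_inv_cancel_left] at this ⊢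
        rw [this]; ring
    _ =ᵐ[μ.prod μ] fun p => v p.1 * starRingEnd ℂ (v p.2) * ((U₂ (Q ξ) : G × G → ℂ) p) := by
        filter_upwards [hU₂ (Q ξ)] with p hp
        rw [hp]
    _ =ᵐ[μ.prod μ] (P (U₂ (Q ξ)) : G × G → ℂ) := (hP (U₂ (Q ξ))).symm
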